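/- Every connected induced subgraph of a line graph that is an odd cactus is either an odd cycle or the line graph of a tree. -/

import Mathlib

/-- `B` induces a biconnected subgraph of `G`. -/
def IsBiconnectedSet {V : Type} (G : SimpleGraph V) (B : Set V) : Prop :=
  2 ≤ B.ncard ∧ (G.induce B).Connected ∧ ∀ v ∈ B, (G.induce (B \ {v})).Preconnected

/-- A block of `G`: a maximal biconnected subgraph. -/
def IsBlock {V : Type} (G : SimpleGraph V) (B : Set V) : Prop :=
  IsBiconnectedSet G B ∧ ∀ B', IsBiconnectedSet G B' → B ⊆ B' → B = B'

/-- An odd cactus: every block is an edge or an odd cycle. -/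
def IsOddCactus {V : Type} (G : SimpleGraph V) : Prop :=
  ∀ B : Set V, IsBlock G B →
    Nonempty ((G.induce B) ≃g (⊤ : SimpleGraph (Fin 2))) ∨
      ∃ k : ℕ, 1 ≤ k ∧ Nonempty ((G.induce B) ≃g SimpleGraph.cycleGraph (2 * k + 1))


open SimpleGraph Set

section Generic
variable {α β : Type*}

/-- inclusion hom between induced subgraphs -/
def inclHom (A : SimpleGraph α) {s t : Set α} (h : s ⊆ t) :
    A.induce s →g A.induce t where
  toFun x := ⟨x.1, h x.2⟩
  map_rel' := fun hadj => hadj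

def induceInduceIso (A : SimpleGraph α) {s t : Set α} (hts : t ⊆ s) :
    (A.induce t) ≃g ((A.induce s).induce {x : s | x.val ∈ t}) where
  toFun a := ⟨⟨a.1, hts a.2⟩, a.2⟩
  invFun b := ⟨b.1.1, b.2⟩
  left_inv _ := rfl
  right_inv _ := rfl
  map_rel_iff' := Iff.rfl

def isoInduce {A : SimpleGraph α} {Bg : SimpleGraph β} (φ : A ≃g Bg) (s : Set α) :
    (A.induce s) ≃g (Bg.induce ((φ : α → β) '' s)) where
  toEquiv := φ.toEquiv.image s
  map_rel_iff' := by
    intro a b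
    simp only [Equiv.image, comap_adj, Function.Embedding.coe_subtype, Equiv.coe_fn_mk]
    exact φ.map_rel_iff

lemma Preconnected.iso {A : SimpleGraph α} {Bg : SimpleGraph β} (φ : A ≃g Bg)
    (h : A.Preconnected) : Bg.Preconnected :=
  h.map φ.toHom φ.toEquiv.surjective

lemma preconnected_insert {A : SimpleGraph α} {s : Set α} (hs : (A.induce s).Preconnected)
    {b a : α} (ha : a ∈ s) (hb : b ∈ s ∨ b ∉ s) (hab : A.Adj b a) :
    (A.induce (insert b s)).Preconnected := by
  have key : ∀ x : ↥(insert b s), (A.induce (insert b s)).Reachable x ⟨a, Or.inr ha⟩ := by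
    rintro ⟨x, hx | hx⟩
    · subst hx
      exact Adj.reachable (by exact hab)
    · exact Reachable.map (inclHom A (Set.subset_insert b s)) (hs ⟨x, hx⟩ ⟨a, ha⟩)
  intro x y
  exact (key x).trans (key y).symm

lemma exists_adj_cross {A : SimpleGraph α} {s : Set α} {y : α} (hy : y ∈ s) :
    ∀ {x : α}, A.Walk x y → x ∉ s → ∃ b, b ∉ s ∧ ∃ a ∈ s, A.Adj b a := by
  intro x p
  induction p with
  | nil => intro hx; exact absurd hy hx
  | @cons u w _ h q ih =>
    intro hx
    by_cases hw : w ∈ s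
    · exact ⟨u, hx, w, hw, h⟩
    · exact ih hy hw

lemma adj_of_reachable_ne {A : SimpleGraph α} {u v : α} (h : A.Reachable u v) (hne : u ≠ v) :
    ∃ z, A.Adj u z := by
  obtain ⟨p⟩ := h
  cases p with
  | nil => exact absurd rfl hne
  | cons h q => exact ⟨_, h⟩

end Generic

/-- The rotation automorphism of the cycle graph. -/
def cycleRotIso {n : ℕ} (a : Fin (n + 3)) :
    cycleGraph (n + 3) ≃g cycleGraph (n + 3) where
  toEquiv := Equiv.subRight a
  map_rel_iff' := by
    intro x y
    simp only [Equiv.subRight_apply, cycleGraph_adj]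
    constructor
    · rintro (h | h)
      · left; rw [← h]; abel
      · right; rw [← h]; abel
    · rintro (h | h)
      · left; rw [← h]; abel
      · right; rw [← h]; abel

lemma cyc_adj_nonzero {n : ℕ} {u v : Fin (n + 3)} (hu : u ≠ 0) (hv : v ≠ 0)
    (h : (cycleGraph (n + 3)).Adj u v) :
    u.val = v.val + 1 ∨ v.val = u.val + 1 := by
  rw [cycleGraph_adj] at h
  have hone : ((1 : Fin (n + 3)) : ℕ) = 1 := rfl
  have hu' : u.val ≠ 0 := fun h0 => hu (Fin.ext h0)
  have hv' : v.val ≠ 0 := fun h0 => hv (Fin.ext h0)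
  have hul := u.isLt
  have hvl := v.isLt
  rcases h with h | h
  · left
    have : u = v + 1 := by rw [← h]; abel
    have h2 := congrArg Fin.val this
    rw [Fin.val_add, hone] at h2
    rcases Nat.lt_or_ge (v.val + 1) (n + 3) with hlt | hge
    · rw [Nat.mod_eq_of_lt hlt] at h2; omega
    · have : (v.val + 1) % (n + 3) = 0 := by
        have : v.val + 1 = n + 3 := by omega
        simp [this]
      omega
  · right
    have : v = u + 1 := by rw [← h]; abel
    have h2 := congrArg Fin.val this
    rw [Fin.val_add, hone] at h2
    rcases Nat.lt_or_ge (u.val + 1) (n + 3) with hlt | hge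
    · rw [Nat.mod_eq_of_lt hlt] at h2; omega
    · have : (u.val + 1) % (n + 3) = 0 := by
        have : u.val + 1 = n + 3 := by omega
        simp [this]
      omega

lemma cycle_subset_eq_univ' {n : ℕ} {S : Set (Fin (n + 3))} (h3 : 3 ≤ S.ncard)
    (h0 : (0 : Fin (n + 3)) ∉ S)
    (hconn : ((cycleGraph (n + 3)).induce S).Preconnected)
    (hdel : ∀ v ∈ S, ((cycleGraph (n + 3)).induce (S \ {v})).Preconnected) : False := by
  classical
  -- minimum element
  have hfin : S.Finite := Set.toFinite _
  have hne : S.Nonempty := by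
    rcases Set.eq_empty_or_nonempty S with h | h
    · rw [h] at h3; simp at h3
    · exact h
  obtain ⟨x, hxS, hxmin⟩ := Set.exists_min_image S (fun y => y.val) hfin hne
  have hx0 : x ≠ 0 := fun h => h0 (h ▸ hxS)
  -- find a neighbor z of x inside S
  obtain ⟨y, hyS, hyx⟩ := Set.exists_ne_of_one_lt_ncard (s := S) (by omega) x
  obtain ⟨z, hz⟩ := adj_of_reachable_ne (hconn ⟨x, hxS⟩ ⟨y, hyS⟩)
      (fun h => hyx (congrArg Subtype.val h).symm)
  have hzadj : (cycleGraph (n + 3)).Adj x z.val := hz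
  have hz0 : (z : Fin (n + 3)) ≠ 0 := fun h => h0 (h ▸ z.2)
  have hzval : (z : Fin (n + 3)).val = x.val + 1 := by
    rcases cyc_adj_nonzero hx0 hz0 hzadj with h | h
    · exact absurd h (by have := hxmin z.val z.2; omega)
    · exact h
  -- delete z; x becomes isolated
  have hpre := hdel z.val z.2
  have hxz : x ≠ (z : Fin (n + 3)) := by
    intro h; rw [h] at hzval; omega
  have hxS' : x ∈ S \ {(z : Fin (n + 3))} := ⟨hxS, hxz⟩
  -- another element distinct from x and z
  have h2 : 1 < (S \ {(z : Fin (n + 3))}).ncard := by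
    have := Set.ncard_diff_singleton_of_mem z.2
    omega
  obtain ⟨y₂, hy₂, hy₂x⟩ := Set.exists_ne_of_one_lt_ncard h2 x
  obtain ⟨z₂, hz₂⟩ := adj_of_reachable_ne (hpre ⟨x, hxS'⟩ ⟨y₂, hy₂⟩)
      (fun h => hy₂x (congrArg Subtype.val h).symm)
  have hz₂adj : (cycleGraph (n + 3)).Adj x z₂.val := hz₂
  have hz₂0 : (z₂ : Fin (n + 3)) ≠ 0 := fun h => h0 (h ▸ z₂.2.1)
  rcases cyc_adj_nonzero hx0 hz₂0 hz₂adj with h | h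
  · exact absurd h (by have := hxmin z₂.val z₂.2.1; omega)
  · have : (z₂ : Fin (n + 3)) = (z : Fin (n + 3)) := Fin.ext (by omega)
    exact z₂.2.2 this

lemma cycle_subset_eq_univ {m : ℕ} {S : Set (Fin m)} (h3 : 3 ≤ S.ncard)
    (hconn : ((cycleGraph m).induce S).Preconnected)
    (hdel : ∀ v ∈ S, ((cycleGraph m).induce (S \ {v})).Preconnected) : S = Set.univ := by
  classical
  have hm : 3 ≤ m := by
    have h1 : S.ncard ≤ (Set.univ : Set (Fin m)).ncard :=
      Set.ncard_le_ncard (Set.subset_univ S) (Set.toFinite _)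
    have h2 : (Set.univ : Set (Fin m)).ncard = m := by
      rw [Set.ncard_univ, Nat.card_eq_fintype_card, Fintype.card_fin]
    omega
  obtain ⟨n, rfl⟩ : ∃ n, m = n + 3 := ⟨m - 3, by omega⟩
  by_contra hSu
  obtain ⟨a, -, haS⟩ : ∃ a ∈ (Set.univ : Set (Fin (n + 3))), a ∉ S := by
    rcases Set.not_subset.mp (fun h => hSu (Set.eq_univ_of_univ_subset h)) with ⟨a, ha, ha'⟩
    exact ⟨a, trivial, ha'⟩
  set ρ := cycleRotIso a with hρ
  have hinj : Function.Injective (ρ : Fin (n + 3) → Fin (n + 3)) := ρ.toEquiv.injective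
  set S' : Set (Fin (n + 3)) := (ρ : Fin (n + 3) → Fin (n + 3)) '' S with hS'
  have h0 : (0 : Fin (n + 3)) ∉ S' := by
    rintro ⟨x, hx, hx0⟩
    have : x = a := by
      have : x - a = 0 := hx0
      rwa [sub_eq_zero] at this
    exact haS (this ▸ hx)
  refine cycle_subset_eq_univ' (S := S') ?_ h0 ?_ ?_
  · rwa [hS', Set.ncard_image_of_injective _ hinj]
  · exact Preconnected.iso (isoInduce ρ S) hconn
  · rintro v' ⟨v, hv, rfl⟩
    have := Preconnected.iso (isoInduce ρ (S \ {v})) (hdel v hv)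
    rwa [Set.image_diff hinj, Set.image_singleton] at this

section Main
variable {V : Type} {G : SimpleGraph V} {D : Set G.edgeSet}

/-- The spanning subgraph of `G` with edge set `D`. -/
def supGraph (G : SimpleGraph V) (D : Set G.edgeSet) : SimpleGraph V where
  Adj u v := u ≠ v ∧ ∃ d : D, ((d : G.edgeSet) : Sym2 V) = s(u, v)
  symm := ⟨by rintro u v ⟨hne, d, hd⟩; exact ⟨hne.symm, d, by rw [hd, Sym2.eq_swap]⟩⟩
  loopless := ⟨fun v h => h.1 rfl⟩

lemma supGraph_adj {u v : V} :
    (supGraph G D).Adj u v ↔ u ≠ v ∧ ∃ d : D, ((d : G.edgeSet) : Sym2 V) = s(u, v) := Iff.rfl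

/-- The underlying `Sym2 V` of an element of `D`. -/
def κ (d : ↥D) : Sym2 V := ((d : G.edgeSet) : Sym2 V)

lemma κ_injective : Function.Injective (κ (G := G) (D := D)) := by
  intro a b h
  exact Subtype.ext (Subtype.ext h)

lemma supGraph_edge {e : Sym2 V} (he : e ∈ (supGraph G D).edgeSet) : ∃ d : ↥D, κ d = e := by
  induction e with
  | _ u v => exact (supGraph_adj.mp he).2

lemma lh_adj {d₁ d₂ : ↥D} :
    ((G.lineGraph).induce D).Adj d₁ d₂ ↔ κ d₁ ≠ κ d₂ ∧ ∃ v, v ∈ κ d₁ ∧ v ∈ κ d₂ := by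
  rw [comap_adj, lineGraph_adj_iff_exists]
  constructor
  · rintro ⟨hne, v, hv⟩
    exact ⟨fun h => hne (Subtype.ext h), v, hv⟩
  · rintro ⟨hne, v, hv⟩
    exact ⟨fun h => hne (congrArg Subtype.val h), v, hv⟩

lemma walk_edges_reachable {x y : V} (p : (supGraph G D).Walk x y) :
    ∀ a b : {d : ↥D | κ d ∈ p.edges},
      (((G.lineGraph).induce D).induce {d : ↥D | κ d ∈ p.edges}).Reachable a b := by
  induction p with
  | nil =>
    rintro ⟨a, ha⟩
    simp only [Set.mem_setOf_eq, Walk.edges_nil, List.not_mem_nil] at ha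
  | @cons u w y h q ih =>
    obtain ⟨d₀, hd₀⟩ := (supGraph_adj.mp h).2
    have hd₀' : (κ d₀ : Sym2 V) = s(u, w) := hd₀
    have hd₀mem : d₀ ∈ {d : ↥D | κ d ∈ (Walk.cons h q).edges} := by
      simp only [Set.mem_setOf_eq, Walk.edges_cons, List.mem_cons]
      exact Or.inl hd₀'
    have hsub : {d : ↥D | κ d ∈ q.edges} ⊆ {d : ↥D | κ d ∈ (Walk.cons h q).edges} := by
      intro d hd
      simp only [Set.mem_setOf_eq, Walk.edges_cons, List.mem_cons]
      exact Or.inr hd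
    have key : ∀ a : {d : ↥D | κ d ∈ (Walk.cons h q).edges},
        (((G.lineGraph).induce D).induce
          {d : ↥D | κ d ∈ (Walk.cons h q).edges}).Reachable a ⟨d₀, hd₀mem⟩ := by
      rintro ⟨a, ha⟩
      have ha' : κ a = s(u, w) ∨ κ a ∈ q.edges := by
        simpa only [Set.mem_setOf_eq, Walk.edges_cons, List.mem_cons] using ha
      rcases ha' with ha' | ha'
      · have : a = d₀ := κ_injective (by rw [ha', hd₀'])
        subst this
        rfl
      · -- a is an edge of q; walk through q to its first edge, then step to d₀
        cases q with
        | nil => simp only [Walk.edges_nil, List.not_mem_nil] at ha'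
        | @cons w w' y h' q' =>
          obtain ⟨d₁, hd₁⟩ := (supGraph_adj.mp h').2
          have hd₁' : (κ d₁ : Sym2 V) = s(w, w') := hd₁
          have hd₁mem : d₁ ∈ {d : ↥D | κ d ∈ (Walk.cons h' q').edges} := by
            simp only [Set.mem_setOf_eq, Walk.edges_cons, List.mem_cons]
            exact Or.inl hd₁'
          have r₁ := (ih ⟨a, ha'⟩ ⟨d₁, hd₁mem⟩).map (inclHom _ hsub)
          have r₂ : (((G.lineGraph).induce D).induce
              {d : ↥D | κ d ∈ (Walk.cons h (Walk.cons h' q')).edges}).Reachable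
              ⟨d₁, hsub hd₁mem⟩ ⟨d₀, hd₀mem⟩ := by
            by_cases heq : d₁ = d₀
            · subst heq; rfl
            · refine Adj.reachable ?_
              show ((G.lineGraph).induce D).Adj d₁ d₀
              rw [lh_adj]
              refine ⟨fun hh => heq (κ_injective hh), w, ?_, ?_⟩
              · rw [hd₁']; exact Sym2.mem_mk_left w w'
              · rw [hd₀']; exact Sym2.mem_mk_right u w
          exact r₁.trans r₂
    intro a b
    exact (key a).trans (key b).symm

end Main

section Cyc
variable {α : Type*} [DecidableEq α] {A : SimpleGraph α}

lemma mem_support_of_mem_edge {x y : α} {p : A.Walk x y} {e : Sym2 α} (he : e ∈ p.edges)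
    {v : α} (hv : v ∈ e) : v ∈ p.support := by
  induction e with
  | _ a b =>
    rcases Sym2.mem_iff.mp hv with rfl | rfl
    · exact p.fst_mem_support_of_mem_edges he
    · exact p.snd_mem_support_of_mem_edges he

lemma path_first_edge {u z : α} {p : A.Walk u z} (hp : p.IsPath) {e : Sym2 α}
    (he : e ∈ p.edges) (hu : u ∈ e) :
    ∃ (b : α) (hadj : A.Adj u b) (r : A.Walk b z), p = Walk.cons hadj r ∧ e = s(u, b) := by
  cases p with
  | nil => simp at he
  | @cons _ b _ h r =>
    rw [Walk.edges_cons, List.mem_cons] at he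
    rcases he with he | he
    · exact ⟨b, h, r, rfl, he⟩
    · exfalso
      have hmem : u ∈ r.support := mem_support_of_mem_edge he hu
      have := hp.support_nodup
      rw [Walk.support_cons, List.nodup_cons] at this
      exact this.1 hmem

lemma cycle_delete_edge {v : α} {c : A.Walk v v} (hc : c.IsCycle) {e : Sym2 α}
    (he : e ∈ c.edges) :
    ∃ (x y : α) (q : A.Walk x y), ∀ f, f ∈ q.edges ↔ (f ∈ c.edges ∧ f ≠ e) := by
  induction e with
  | _ u w =>
    have hu : u ∈ c.support := c.fst_mem_support_of_mem_edges he
    have hp : (c.rotate u hu).IsCycle := hc.rotate hu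
    have hpc : ∀ f, f ∈ (c.rotate u hu).edges ↔ f ∈ c.edges :=
      fun f => (Walk.rotate_edges c u hu).mem_iff
    have hep : s(u, w) ∈ (c.rotate u hu).edges := (hpc _).mpr he
    obtain ⟨b, hadj, r, hre⟩ : ∃ (b : α) (hadj : A.Adj u b) (r : A.Walk b u),
        c.rotate u hu = Walk.cons hadj r := by
      cases hP : c.rotate u hu with
      | nil => rw [hP] at hp; exact absurd (hp.three_le_length) (by simp)
      | cons h r => exact ⟨_, h, r, rfl⟩
    rw [hre] at hp hep
    have hpc' : ∀ f, f ∈ (Walk.cons hadj r).edges ↔ f ∈ c.edges := by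
      intro f; rw [← hpc f, hre]
    obtain ⟨hpath, hfir⟩ := (Walk.cons_isCycle_iff r hadj).mp hp
    by_cases hcase : s(u, w) = s(u, b)
    · refine ⟨b, u, r, fun f => ?_⟩
      rw [← hpc' f, Walk.edges_cons, List.mem_cons]
      constructor
      · intro hf
        refine ⟨Or.inr hf, fun hfe => ?_⟩
        rw [hfe, hcase] at hf
        exact hfir hf
      · rintro ⟨hf | hf, hfe⟩
        · exact absurd (hf.trans hcase.symm) hfe
        · exact hf
    · have her : s(u, w) ∈ r.edges := by
        rcases List.mem_cons.mp hep with h' | h'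
        · exact absurd h' hcase
        · exact h'
      have herev : s(u, w) ∈ r.reverse.edges := by
        rw [Walk.edges_reverse, List.mem_reverse]; exact her
      obtain ⟨t, hadj₂, r₂, hrev, he₂⟩ :=
        path_first_edge hpath.reverse herev (Sym2.mem_mk_left u w)
      have ht : w = t := Sym2.congr_right.mp he₂
      subst ht
      have hr₂ : s(u, w) ∉ r₂.edges := by
        have hnd : r.reverse.edges.Nodup := hpath.reverse.isTrail.edges_nodup
        rw [hrev, Walk.edges_cons] at hnd
        exact (List.nodup_cons.mp hnd).1
      have hrmem : ∀ f, f ∈ r.edges ↔ f = s(u, w) ∨ f ∈ r₂.edges := by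
        intro f
        rw [← List.mem_reverse, ← Walk.edges_reverse, hrev, Walk.edges_cons, List.mem_cons]
      refine ⟨u, w, Walk.cons hadj r₂.reverse, fun f => ?_⟩
      rw [Walk.edges_cons, List.mem_cons, ← hpc' f, Walk.edges_cons, List.mem_cons,
        Walk.edges_reverse, List.mem_reverse, hrmem f]
      constructor
      · rintro (hf | hf)
        · subst hf
          refine ⟨Or.inl rfl, fun hfe => ?_⟩
          rw [hfe] at hfir
          exact hfir her
        · refine ⟨Or.inr (Or.inr hf), fun hfe => ?_⟩
          rw [hfe] at hf
          exact hr₂ hf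
      · rintro ⟨hf | hf, hfe⟩
        · exact Or.inl hf
        · rcases hf with hf | hf
          · exact absurd hf hfe
          · exact Or.inr hf

lemma cycle_other_edge {v : α} {c : A.Walk v v} (hc : c.IsCycle) {e : Sym2 α}
    (he : e ∈ c.edges) {w : α} (hw : w ∈ e) :
    ∃ e', e' ∈ c.edges ∧ e' ≠ e ∧ w ∈ e' := by
  have hwsup : w ∈ c.support := mem_support_of_mem_edge he hw
  have hp : (c.rotate w hwsup).IsCycle := hc.rotate hwsup
  have hpc : ∀ f, f ∈ (c.rotate w hwsup).edges ↔ f ∈ c.edges :=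
    fun f => (Walk.rotate_edges c w hwsup).mem_iff
  obtain ⟨b, hadj, r, hre⟩ : ∃ (b : α) (hadj : A.Adj w b) (r : A.Walk b w),
      c.rotate w hwsup = Walk.cons hadj r := by
    cases hP : c.rotate w hwsup with
    | nil => rw [hP] at hp; exact absurd (hp.three_le_length) (by simp)
    | cons h r => exact ⟨_, h, r, rfl⟩
  rw [hre] at hp
  have hpc' : ∀ f, f ∈ (Walk.cons hadj r).edges ↔ f ∈ c.edges := by
    intro f; rw [← hpc f, hre]
  obtain ⟨hpath, hfir⟩ := (Walk.cons_isCycle_iff r hadj).mp hp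
  by_cases hcase : e = s(w, b)
  · -- produce the last edge of r (= first edge of r.reverse)
    have hrnil : ¬ r.Nil := by
      have h3 := hp.three_le_length
      rw [Walk.length_cons] at h3
      intro hnil
      rw [Walk.nil_iff_length_eq.mp hnil] at h3
      omega
    obtain ⟨t, hadj₂, r₂, hrev, -⟩ : ∃ (t : α) (hadj₂ : A.Adj w t) (r₂ : A.Walk t b),
        r.reverse = Walk.cons hadj₂ r₂ ∧ True := by
      cases hP : r.reverse with
      | nil =>
        exfalso
        have := congrArg Walk.length hP
        rw [Walk.length_reverse] at this
        exact hrnil (Walk.nil_iff_length_eq.mpr (by simpa using this))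
      | cons h' r₂ => exact ⟨_, h', r₂, rfl, trivial⟩
    refine ⟨s(w, t), ?_, ?_, Sym2.mem_mk_left w t⟩
    · rw [← hpc' _, Walk.edges_cons, List.mem_cons]
      right
      rw [← List.mem_reverse, ← Walk.edges_reverse, hrev, Walk.edges_cons]
      exact List.mem_cons_self
    · intro hcontra
      rw [hcase] at hcontra
      apply hfir
      rw [← hcontra]
      rw [← List.mem_reverse, ← Walk.edges_reverse, hrev, Walk.edges_cons]
      exact List.mem_cons_self
  · refine ⟨s(w, b), ?_, fun h' => hcase h'.symm, Sym2.mem_mk_left w b⟩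
    rw [← hpc' _, Walk.edges_cons, List.mem_cons]
    exact Or.inl rfl

end Cyc


lemma exists_block {α : Type} [Finite α] (A : SimpleGraph α) {S : Set α}
    (hS : IsBiconnectedSet A S) : ∃ B, IsBlock A B ∧ S ⊆ B := by
  classical
  have hfin : {B : Set α | IsBiconnectedSet A B ∧ S ⊆ B}.Finite := Set.toFinite _
  obtain ⟨B, hB, hBmax⟩ := Set.Finite.exists_maximalFor Set.ncard _ hfin ⟨S, hS, subset_rfl⟩
  refine ⟨B, ⟨hB.1, fun B' hB' hBB' => ?_⟩, hB.2⟩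
  have hB'mem : B' ∈ {B : Set α | IsBiconnectedSet A B ∧ S ⊆ B} := ⟨hB', hB.2.trans hBB'⟩
  have hcard := hBmax hB'mem (Set.ncard_le_ncard hBB' (Set.toFinite _))
  exact Set.eq_of_subset_of_ncard_le hBB' hcard (Set.toFinite _)

section Main2
variable {V : Type} [Finite V] [DecidableEq V] {G : SimpleGraph V} {D : Set G.edgeSet}

lemma ncard_edgeSetOf {v : V} (c : (supGraph G D).Walk v v) (hc : c.IsTrail) :
    {d : ↥D | κ d ∈ c.edges}.ncard = c.length := by
  classical
  have e1 : {d : ↥D | κ d ∈ c.edges} ≃ {e : Sym2 V // e ∈ c.edges} :=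
    { toFun := fun x => ⟨κ x.1, x.2⟩
      invFun := fun y =>
        ⟨(supGraph_edge (c.edges_subset_edgeSet y.2)).choose, by
          have := (supGraph_edge (c.edges_subset_edgeSet y.2)).choose_spec
          simp only [Set.mem_setOf_eq, this]
          exact y.2⟩
      left_inv := fun x => by
        apply Subtype.ext
        exact κ_injective (supGraph_edge (c.edges_subset_edgeSet x.2)).choose_spec
      right_inv := fun y => Subtype.ext (supGraph_edge (c.edges_subset_edgeSet y.2)).choose_spec }
  have e2 : {e : Sym2 V // e ∈ c.edges} ≃ {e : Sym2 V // e ∈ c.edges.toFinset} :=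
    Equiv.subtypeEquivRight (by intro e; simp)
  calc {d : ↥D | κ d ∈ c.edges}.ncard
      = Nat.card {d : ↥D | κ d ∈ c.edges} := (Nat.card_coe_set_eq _).symm
    _ = Nat.card {e : Sym2 V // e ∈ c.edges.toFinset} :=
        Nat.card_congr (e1.trans e2)
    _ = c.edges.toFinset.card := by
        rw [Nat.card_eq_fintype_card, Fintype.card_coe]
    _ = c.edges.length := List.toFinset_card_of_nodup hc.edges_nodup
    _ = c.length := c.length_edges

lemma cycle_edges_nonempty {v : V} {c : (supGraph G D).Walk v v} (hc : c.IsCycle) :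
    ∃ d : ↥D, κ d ∈ c.edges := by
  have h3 := hc.three_le_length
  have : c.edges ≠ [] := by
    intro h
    have := c.length_edges
    rw [h] at this
    simp at this
    omega
  obtain ⟨e, he⟩ := List.exists_mem_of_ne_nil _ this
  obtain ⟨d, hd⟩ := supGraph_edge (c.edges_subset_edgeSet he)
  exact ⟨d, hd ▸ he⟩

lemma cycle_edges_biconnected {v : V} {c : (supGraph G D).Walk v v} (hc : c.IsCycle) :
    IsBiconnectedSet ((G.lineGraph).induce D) {d : ↥D | κ d ∈ c.edges} := by
  have hcard := ncard_edgeSetOf c hc.isTrail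
  have h3 := hc.three_le_length
  refine ⟨by omega, ?_, ?_⟩
  · rw [connected_iff]
    refine ⟨fun a b => walk_edges_reachable c a b, ?_⟩
    obtain ⟨d, hd⟩ := cycle_edges_nonempty hc
    exact ⟨⟨d, hd⟩⟩
  · intro dv hdv
    obtain ⟨x, y, q, hq⟩ := cycle_delete_edge hc hdv
    have hset : {d : ↥D | κ d ∈ c.edges} \ {dv} = {d : ↥D | κ d ∈ q.edges} := by
      ext d
      simp only [Set.mem_diff, Set.mem_setOf_eq, Set.mem_singleton_iff, hq]
      constructor
      · rintro ⟨h1, h2⟩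
        exact ⟨h1, fun h' => h2 (κ_injective h')⟩
      · rintro ⟨h1, h2⟩
        exact ⟨h1, fun h' => h2 (by rw [h'])⟩
    rw [hset]
    exact fun a b => walk_edges_reachable q a b

lemma cycle_edges_ext_biconnected {v : V} {c : (supGraph G D).Walk v v} (hc : c.IsCycle)
    {f g : ↥D} (hgS : κ g ∈ c.edges) (hf : κ f ∉ c.edges)
    (hadj : ((G.lineGraph).induce D).Adj f g) :
    IsBiconnectedSet ((G.lineGraph).induce D) (insert f {d : ↥D | κ d ∈ c.edges}) := by
  classical
  set S : Set ↥D := {d : ↥D | κ d ∈ c.edges} with hS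
  have hbS := cycle_edges_biconnected (D := D) hc
  have hfS : f ∉ S := hf
  have hcard := ncard_edgeSetOf c hc.isTrail
  have h3 := hc.three_le_length
  refine ⟨?_, ?_, ?_⟩
  · rw [Set.ncard_insert_of_notMem hfS (Set.toFinite _), hS]
    omega
  · rw [connected_iff]
    exact ⟨preconnected_insert hbS.2.1.preconnected hgS (Or.inr hfS) hadj,
      ⟨⟨f, Set.mem_insert f S⟩⟩⟩
  · intro z hz
    rcases Set.mem_insert_iff.mp hz with rfl | hzS
    · have hins : insert z S \ {z} = S := by
        ext d
        simp only [Set.mem_diff, Set.mem_insert_iff, Set.mem_singleton_iff]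
        constructor
        · rintro ⟨h | h, h2⟩
          · exact absurd h h2
          · exact h
        · intro hd
          exact ⟨Or.inr hd, fun h => hfS (h ▸ hd)⟩
      rw [hins]
      exact hbS.2.1.preconnected
    · have hzf : z ≠ f := fun h => hfS (h ▸ hzS)
      have hset : insert f S \ {z} = insert f (S \ {z}) := by
        rw [Set.insert_diff_singleton_comm hzf.symm]
      rw [hset]
      -- S \ {z} is preconnected
      obtain ⟨x, y, q, hq⟩ := cycle_delete_edge hc hzS
      have hset2 : S \ {z} = {d : ↥D | κ d ∈ q.edges} := by
        ext d
        simp only [hS, Set.mem_diff, Set.mem_setOf_eq, Set.mem_singleton_iff, hq]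
        constructor
        · rintro ⟨h1, h2⟩
          exact ⟨h1, fun h' => h2 (κ_injective h')⟩
        · rintro ⟨h1, h2⟩
          exact ⟨h1, fun h' => h2 (by rw [h'])⟩
      have hpre : (((G.lineGraph).induce D).induce (S \ {z})).Preconnected := by
        rw [hset2]
        exact fun a b => walk_edges_reachable q a b
      -- f is adjacent to something in S \ {z}
      by_cases hgz : g = z
      · subst hgz
        obtain ⟨hne, w, hw1, hw2⟩ := lh_adj.mp hadj
        obtain ⟨e', he'c, he'g, hwe'⟩ := cycle_other_edge hc hgS hw2
        obtain ⟨d'', hd''⟩ := supGraph_edge (c.edges_subset_edgeSet he'c)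
        have hd''S : d'' ∈ S \ {g} := by
          refine ⟨by rw [hS, Set.mem_setOf_eq, hd'']; exact he'c, ?_⟩
          simp only [Set.mem_singleton_iff]
          exact fun h => he'g (by rw [← hd'', h])
        have hfd'' : ((G.lineGraph).induce D).Adj f d'' := by
          rw [lh_adj]
          refine ⟨fun h => hf (by rw [h, hd'']; exact he'c), w, hw1, ?_⟩
          rw [hd'']
          exact hwe'
        exact preconnected_insert hpre hd''S (Or.inr (fun h => hfS h.1)) hfd''
      · have hgSz : g ∈ S \ {z} := ⟨hgS, by simpa using hgz⟩
        exact preconnected_insert hpre hgSz (Or.inr (fun h => hfS h.1)) hadj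

end Main2

lemma ncard_eq_of_iso_aux {α β : Type} [Finite β] {A : SimpleGraph α} {Bg : SimpleGraph β}
    {B : Set α} (ψ : (A.induce B) ≃g Bg) : B.ncard = Nat.card β := by
  rw [← Nat.card_coe_set_eq]
  exact Nat.card_congr ψ.toEquiv

lemma bicon_subset_of_cycle_block {α : Type} {A : SimpleGraph α} {B : Set α} {m : ℕ}
    (ψ : (A.induce B) ≃g cycleGraph m) {S : Set α} (hSB : S ⊆ B)
    (h3 : 3 ≤ S.ncard) (hconn : (A.induce S).Connected)
    (hdel : ∀ v ∈ S, (A.induce (S \ {v})).Preconnected) : S = B := by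
  classical
  set S₁ : Set ↥B := {x : ↥B | x.val ∈ S} with hS₁
  set S'' : Set (Fin m) := (ψ : ↥B → Fin m) '' S₁ with hS''
  have hψinj : Function.Injective (ψ : ↥B → Fin m) := ψ.toEquiv.injective
  have hcard1 : S₁.ncard = S.ncard := by
    rw [← Nat.card_coe_set_eq, ← Nat.card_coe_set_eq]
    exact Nat.card_congr
      ⟨fun x => ⟨x.1.1, x.2⟩, fun y => ⟨⟨y.1, hSB y.2⟩, y.2⟩, fun _ => rfl, fun _ => rfl⟩
  have huniv : S'' = Set.univ := by
    apply cycle_subset_eq_univ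
    · rw [hS'', Set.ncard_image_of_injective _ hψinj, hcard1]
      exact h3
    · have θ := (induceInduceIso A hSB).trans (isoInduce ψ S₁)
      exact Preconnected.iso θ hconn.preconnected
    · rintro v'' ⟨x₁, hx₁, rfl⟩
      set v : α := x₁.val with hv
      have hvS : v ∈ S := hx₁
      have hsub2 : S \ {v} ⊆ B := (Set.diff_subset).trans hSB
      have θ' := (induceInduceIso A hsub2).trans (isoInduce ψ {x : ↥B | x.val ∈ S \ {v}})
      have hpre := Preconnected.iso θ' (hdel v hvS)
      have hsetid : (ψ : ↥B → Fin m) '' {x : ↥B | x.val ∈ S \ {v}} = S'' \ {ψ x₁} := by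
        ext y
        constructor
        · rintro ⟨x, ⟨hxS, hxv⟩, rfl⟩
          refine ⟨⟨x, hxS, rfl⟩, ?_⟩
          simp only [Set.mem_singleton_iff]
          intro h
          exact hxv (congrArg Subtype.val (hψinj h))
        · rintro ⟨⟨x, hxS, rfl⟩, hy⟩
          refine ⟨x, ⟨hxS, ?_⟩, rfl⟩
          intro h
          apply hy
          simp only [Set.mem_singleton_iff]
          congr 1
          exact Subtype.ext h
      rwa [hsetid] at hpre
  apply Set.Subset.antisymm hSB
  intro b hb
  have : ψ ⟨b, hb⟩ ∈ S'' := huniv ▸ Set.mem_univ _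
  obtain ⟨x, hxS, hx⟩ := this
  have hxb : x = ⟨b, hb⟩ := hψinj hx
  have := hxS
  rw [hxb] at this
  exact this

section Tree
variable {V : Type} {G : SimpleGraph V} {D : Set G.edgeSet}

/-- Support of `D`. -/
def suppSet (G : SimpleGraph V) (D : Set G.edgeSet) : Set V := {v : V | ∃ d : ↥D, v ∈ κ d}

lemma κ_exists_rep (d : ↥D) : ∃ a b : V, κ d = s(a, b) := by
  obtain ⟨⟨a, b⟩, h⟩ := Quot.exists_rep (κ d)
  exact ⟨a, b, h.symm⟩

lemma κ_ne (d : ↥D) {a b : V} (h : κ d = s(a, b)) : a ≠ b := by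
  have : s(a, b) ∈ G.edgeSet := h ▸ (d : G.edgeSet).2
  exact (G.mem_edgeSet.mp this).ne

lemma same_edge_reachable (d : ↥D) {u w : V} (hu : u ∈ κ d) (hw : w ∈ κ d)
    (hu' : u ∈ suppSet G D) (hw' : w ∈ suppSet G D) :
    ((supGraph G D).induce (suppSet G D)).Reachable ⟨u, hu'⟩ ⟨w, hw'⟩ := by
  obtain ⟨a, b, hab⟩ := κ_exists_rep d
  have hne : a ≠ b := κ_ne d hab
  rw [hab] at hu hw
  have hadj : ∀ (hx : a ∈ suppSet G D) (hy : b ∈ suppSet G D),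
      ((supGraph G D).induce (suppSet G D)).Adj ⟨a, hx⟩ ⟨b, hy⟩ := by
    intro hx hy
    show (supGraph G D).Adj a b
    exact supGraph_adj.mpr ⟨hne, d, hab⟩
  rcases Sym2.mem_iff.mp hu with rfl | rfl <;> rcases Sym2.mem_iff.mp hw with rfl | rfl
  · rfl
  · exact (hadj hu' hw').reachable
  · exact ((hadj hw' hu').reachable).symm
  · rfl

lemma line_walk_reachable {d₁ d₂ : ↥D} (p : ((G.lineGraph).induce D).Walk d₁ d₂) :
    ∀ {u w : V} (hu : u ∈ κ d₁) (hw : w ∈ κ d₂),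
    ((supGraph G D).induce (suppSet G D)).Reachable ⟨u, ⟨d₁, hu⟩⟩ ⟨w, ⟨d₂, hw⟩⟩ := by
  induction p with
  | nil => intro u w hu hw; exact same_edge_reachable _ hu hw _ _
  | cons h q ih =>
    intro u w hu hw
    obtain ⟨hne, x, hx1, hx2⟩ := lh_adj.mp h
    exact (same_edge_reachable _ hu hx1 _ ⟨_, hx2⟩).trans (ih hx2 hw)

lemma suppTree_connected (hconn : ((G.lineGraph).induce D).Connected) :
    ((supGraph G D).induce (suppSet G D)).Connected := by
  rw [connected_iff]
  constructor
  · rintro ⟨u, hu⟩ ⟨w, hw⟩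
    obtain ⟨d₁, hu'⟩ := hu
    obtain ⟨d₂, hw'⟩ := hw
    exact (hconn.preconnected d₁ d₂).elim (fun p => line_walk_reachable p hu' hw')
  · obtain ⟨d⟩ := hconn.nonempty
    obtain ⟨a, b, hab⟩ := κ_exists_rep d
    exact ⟨⟨a, ⟨d, by rw [hab]; exact Sym2.mem_mk_left a b⟩⟩⟩

lemma suppTree_acyclic (hac : (supGraph G D).IsAcyclic) :
    ((supGraph G D).induce (suppSet G D)).IsAcyclic := by
  intro v c hc
  exact hac _ (hc.map (f := (SimpleGraph.Embedding.induce (G := supGraph G D)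
    (suppSet G D)).toHom) (SimpleGraph.Embedding.induce (G := supGraph G D)
    (suppSet G D)).injective)

lemma tree_edge_exists (t : ((supGraph G D).induce (suppSet G D)).edgeSet) :
    ∃ d : ↥D, κ d = Sym2.map Subtype.val (t : Sym2 ↥(suppSet G D)) := by
  obtain ⟨t, ht⟩ := t
  induction t with
  | _ a b =>
    rw [SimpleGraph.mem_edgeSet] at ht
    obtain ⟨-, d, hd⟩ := supGraph_adj.mp ht
    exact ⟨d, by rw [Sym2.map_pair_eq]; exact hd⟩

noncomputable def treeIso :
    ((supGraph G D).induce (suppSet G D)).lineGraph ≃g ((G.lineGraph).induce D) := by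
  classical
  set W := suppSet G D with hW
  set T := (supGraph G D).induce W with hT
  have hρ : ∀ t : T.edgeSet, κ (tree_edge_exists t).choose = Sym2.map Subtype.val (t : Sym2 ↥W) :=
    fun t => (tree_edge_exists t).choose_spec
  set ρ : T.edgeSet → ↥D := fun t => (tree_edge_exists t).choose with hρdef
  have hmapinj : Function.Injective (Sym2.map (Subtype.val : ↥W → V)) :=
    Sym2.map.injective Subtype.val_injective
  have hinj : Function.Injective ρ := by
    intro t₁ t₂ h
    have : κ (ρ t₁) = κ (ρ t₂) := by rw [h]
    rw [hρ t₁, hρ t₂] at this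
    exact Subtype.ext (hmapinj this)
  have hsurj : Function.Surjective ρ := by
    intro d
    obtain ⟨a, b, hab⟩ := κ_exists_rep d
    have ha : a ∈ W := ⟨d, by rw [hab]; exact Sym2.mem_mk_left a b⟩
    have hb : b ∈ W := ⟨d, by rw [hab]; exact Sym2.mem_mk_right a b⟩
    have ht : s((⟨a, ha⟩ : ↥W), (⟨b, hb⟩ : ↥W)) ∈ T.edgeSet := by
      rw [SimpleGraph.mem_edgeSet]
      exact (supGraph_adj.mpr ⟨κ_ne d hab, d, hab⟩ : (supGraph G D).Adj a b)
    refine ⟨⟨_, ht⟩, ?_⟩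
    apply κ_injective
    rw [hρ ⟨_, ht⟩]
    simp only [Sym2.map_pair_eq]
    exact hab.symm
  exact {
    toEquiv := Equiv.ofBijective ρ ⟨hinj, hsurj⟩
    map_rel_iff' := by
      intro t₁ t₂
      show ((G.lineGraph).induce D).Adj (ρ t₁) (ρ t₂) ↔ T.lineGraph.Adj t₁ t₂
      rw [lh_adj, lineGraph_adj_iff_exists]
      constructor
      · rintro ⟨hne, x, hx1, hx2⟩
        rw [hρ t₁] at hx1
        rw [hρ t₂] at hx2
        obtain ⟨x₁, hx₁, hxv₁⟩ := Sym2.mem_map.mp hx1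
        obtain ⟨x₂, hx₂, hxv₂⟩ := Sym2.mem_map.mp hx2
        have : x₁ = x₂ := Subtype.ext (hxv₁.trans hxv₂.symm)
        refine ⟨?_, x₁, hx₁, this ▸ hx₂⟩
        intro h
        apply hne
        rw [hρ t₁, hρ t₂, h]
      · rintro ⟨hne, x, hx1, hx2⟩
        refine ⟨?_, x.val, ?_, ?_⟩
        · intro h
          rw [hρ t₁, hρ t₂] at h
          exact hne (Subtype.ext (hmapinj h))
        · rw [hρ t₁]
          exact Sym2.mem_map.mpr ⟨x, hx1, rfl⟩
        · rw [hρ t₂]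
          exact Sym2.mem_map.mpr ⟨x, hx2, rfl⟩ }

end Tree


/-- Every connected induced subgraph of a line graph that is an odd cactus is
either an odd cycle or the line graph of a tree. -/
theorem oddCactus_in_lineGraph_cycle_or_lineGraph_of_tree {V : Type} [Fintype V]
    (G : SimpleGraph V) (D : Set G.edgeSet)
    (hconn : ((G.lineGraph).induce D).Connected)
    (hcactus : IsOddCactus ((G.lineGraph).induce D)) :
    (∃ k : ℕ, 1 ≤ k ∧
        Nonempty (((G.lineGraph).induce D) ≃g SimpleGraph.cycleGraph (2 * k + 1))) ∨
      ∃ (W : Type) (T : SimpleGraph W), T.IsTree ∧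
        Nonempty (((G.lineGraph).induce D) ≃g T.lineGraph) := by
  classical
  by_cases hac : (supGraph G D).IsAcyclic
  · right
    exact ⟨↥(suppSet G D), (supGraph G D).induce (suppSet G D),
      ⟨suppTree_connected hconn, suppTree_acyclic hac⟩, ⟨treeIso.symm⟩⟩
  · unfold SimpleGraph.IsAcyclic at hac
    push_neg at hac
    obtain ⟨v, c, hc⟩ := hac
    set S : Set ↥D := {d : ↥D | κ d ∈ c.edges} with hSdef
    have hbS : IsBiconnectedSet ((G.lineGraph).induce D) S := cycle_edges_biconnected hc
    have hcard : S.ncard = c.length := ncard_edgeSetOf c hc.isTrail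
    have h3 := hc.three_le_length
    by_cases hSu : S = Set.univ
    · left
      have hblock : IsBlock ((G.lineGraph).induce D) Set.univ :=
        ⟨hSu ▸ hbS, fun B' _ hsub => (Set.univ_subset_iff.mp hsub).symm⟩
      rcases hcactus _ hblock with hedge | ⟨k, hk, hcyc⟩
      · exfalso
        obtain ⟨φ⟩ := hedge
        have h2 := ncard_eq_of_iso_aux (Bg := (⊤ : SimpleGraph (Fin 2))) φ
        rw [Nat.card_eq_fintype_card, Fintype.card_fin] at h2
        rw [← hSu] at h2
        omega
      · obtain ⟨φ⟩ := hcyc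
        exact ⟨k, hk, ⟨(induceUnivIso _).symm.trans φ⟩⟩
    · exfalso
      obtain ⟨t, htS⟩ : ∃ t, t ∉ S := by
        by_contra h
        push_neg at h
        exact hSu (Set.eq_univ_iff_forall.mpr h)
      obtain ⟨g0, hg0⟩ := cycle_edges_nonempty hc
      obtain ⟨p⟩ := hconn.preconnected t g0
      obtain ⟨f, hfS, g, hgS, hadj⟩ := exists_adj_cross (s := S) hg0 p htS
      have hext := cycle_edges_ext_biconnected hc hgS hfS hadj
      obtain ⟨B, hB, hSB⟩ := exists_block _ hext
      rcases hcactus _ hB with hedge | ⟨k, hk, hcyc⟩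
      · obtain ⟨φ⟩ := hedge
        have h2 := ncard_eq_of_iso_aux (Bg := (⊤ : SimpleGraph (Fin 2))) φ
        rw [Nat.card_eq_fintype_card, Fintype.card_fin] at h2
        have hle : (insert f S).ncard ≤ B.ncard := Set.ncard_le_ncard hSB (Set.toFinite _)
        have hins : (insert f S).ncard = S.ncard + 1 :=
          Set.ncard_insert_of_notMem hfS (Set.toFinite _)
        omega
      · obtain ⟨φ⟩ := hcyc
        have hSsubB : S ⊆ B := (Set.subset_insert f S).trans hSB
        have hSeqB := bicon_subset_of_cycle_block φ hSsubB (by omega) hbS.2.1 hbS.2.2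
        have hfB : f ∈ B := hSB (Set.mem_insert f S)
        rw [← hSeqB] at hfB
        exact hfS hfB
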